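/- arXiv:2506.21373 — 2 statements merged into one kernel-verified Lean document; each statement's English description precedes it below -/
import Mathlib

section
/- Let φ : ℝ^d → ℝ be bounded by c₀ and Lipschitz continuous with constant K, and let κ > 0. Then any minimizer b of v ↦ φ(x+v) + |v|²/(2κ²) satisfies |b| ≤ C·κ^{3/2}, where C depends only on c₀ and K (one may take C = √(2K·√(2c₀))). -/
open scoped RealInnerProductSpace

theorem stmt1 (d : ℕ) (φ : EuclideanSpace ℝ (Fin d) → ℝ) (c₀ : ℝ) (K : NNReal) (κ : ℝ)
    (hφb : ∀ x, |φ x| ≤ c₀) (hK : LipschitzWith K φ) (hκ : 0 < κ)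
    (x b : EuclideanSpace ℝ (Fin d))
    (hb : ∀ v, φ (x + b) + ‖b‖ ^ 2 / (2 * κ ^ 2) ≤ φ (x + v) + ‖v‖ ^ 2 / (2 * κ ^ 2)) :
    ‖b‖ ≤ Real.sqrt (2 * K * Real.sqrt (2 * c₀)) * κ ^ ((3 : ℝ) / 2) := by
  have hc0 : 0 ≤ c₀ := le_trans (abs_nonneg _) (hφb x)
  have hκ2 : (0:ℝ) < 2 * κ ^ 2 := by positivity
  have hKnn : (0:ℝ) ≤ (K:ℝ) := K.coe_nonneg
  -- Step 1 : ‖b‖^2 ≤ 4 c₀ κ^2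
  have h0 := hb 0
  simp only [norm_zero, add_zero] at h0
  have hφ1 := abs_le.mp (hφb x)
  have hφ2 := abs_le.mp (hφb (x + b))
  have h0' : φ (x + b) + ‖b‖ ^ 2 / (2 * κ ^ 2) ≤ φ x := by
    have : (0:ℝ) ^ 2 / (2 * κ ^ 2) = 0 := by simp
    linarith [h0, this.le]
  have h1 : ‖b‖ ^ 2 ≤ 4 * c₀ * κ ^ 2 := by
    have : ‖b‖ ^ 2 / (2 * κ ^ 2) ≤ 2 * c₀ := by
      linarith [hφ1.1, hφ1.2, hφ2.1, hφ2.2, h0']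
    calc ‖b‖ ^ 2 = ‖b‖ ^ 2 / (2 * κ ^ 2) * (2 * κ ^ 2) := by field_simp
    _ ≤ 2 * c₀ * (2 * κ ^ 2) := by nlinarith
    _ = 4 * c₀ * κ ^ 2 := by ring
  -- Step 2 : ‖b‖ ≤ K κ^2
  have h2 : ‖b‖ ≤ (K : ℝ) * κ ^ 2 := by
    rcases eq_or_ne b 0 with rfl | hbne
    · simpa using by positivity
    have hbpos : 0 < ‖b‖ := norm_pos_iff.mpr hbne
    refine le_of_forall_pos_le_add (fun ε hε => ?_)
    set t : ℝ := min 1 (ε / ‖b‖) with ht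
    have ht0 : 0 < t := lt_min one_pos (by positivity)
    have ht1 : t ≤ 1 := min_le_left _ _
    have htε : t * ‖b‖ ≤ ε := by
      have : t ≤ ε / ‖b‖ := min_le_right _ _
      calc t * ‖b‖ ≤ ε / ‖b‖ * ‖b‖ := by nlinarith
      _ = ε := by field_simp
    have hbt := hb ((1 - t) • b)
    have hnorm : ‖(1 - t) • b‖ = (1 - t) * ‖b‖ := by
      rw [norm_smul, Real.norm_eq_abs, abs_of_nonneg (by linarith)]
    rw [hnorm] at hbt
    have hlip : φ (x + (1 - t) • b) - φ (x + b) ≤ (K : ℝ) * (t * ‖b‖) := by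
      have hd := hK.dist_le_mul (x + (1 - t) • b) (x + b)
      have hdist : dist (x + (1 - t) • b) (x + b) = t * ‖b‖ := by
        rw [dist_eq_norm]
        have : (x + (1 - t) • b) - (x + b) = (-t) • b := by module
        rw [this, norm_smul, Real.norm_eq_abs, abs_of_nonpos (by linarith)]
        ring
      rw [hdist] at hd
      calc φ (x + (1 - t) • b) - φ (x + b) ≤ |φ (x + (1 - t) • b) - φ (x + b)| := le_abs_self _
      _ = dist (φ (x + (1 - t) • b)) (φ (x + b)) := (Real.dist_eq _ _).symm
      _ ≤ (K : ℝ) * (t * ‖b‖) := hd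
    -- from hbt : (1 - (1-t)^2) ‖b‖^2 / (2κ^2) ≤ φ(x+(1-t)b) - φ(x+b) ≤ K t ‖b‖
    have key : (2 * t - t ^ 2) * ‖b‖ ^ 2 ≤ 2 * κ ^ 2 * ((K : ℝ) * (t * ‖b‖)) := by
      have h3 : ‖b‖ ^ 2 / (2 * κ ^ 2) - ((1 - t) * ‖b‖) ^ 2 / (2 * κ ^ 2)
          ≤ φ (x + (1 - t) • b) - φ (x + b) := by linarith
      have h4 : (2 * t - t ^ 2) * ‖b‖ ^ 2 / (2 * κ ^ 2) ≤ (K : ℝ) * (t * ‖b‖) := by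
        calc (2 * t - t ^ 2) * ‖b‖ ^ 2 / (2 * κ ^ 2)
            = ‖b‖ ^ 2 / (2 * κ ^ 2) - ((1 - t) * ‖b‖) ^ 2 / (2 * κ ^ 2) := by ring
        _ ≤ _ := le_trans h3 hlip
      calc (2 * t - t ^ 2) * ‖b‖ ^ 2
          = (2 * t - t ^ 2) * ‖b‖ ^ 2 / (2 * κ ^ 2) * (2 * κ ^ 2) := by field_simp
      _ ≤ (K : ℝ) * (t * ‖b‖) * (2 * κ ^ 2) := by nlinarith
      _ = 2 * κ ^ 2 * ((K : ℝ) * (t * ‖b‖)) := by ring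
    -- divide by t ‖b‖ > 0 : (2 - t) ‖b‖ ≤ 2 K κ^2
    have key2 : (2 - t) * ‖b‖ ≤ 2 * (K : ℝ) * κ ^ 2 := by
      have htb : 0 < t * ‖b‖ := by positivity
      have : (2 - t) * ‖b‖ * (t * ‖b‖) ≤ 2 * (K : ℝ) * κ ^ 2 * (t * ‖b‖) := by
        nlinarith [key]
      exact le_of_mul_le_mul_right this htb
    -- hence ‖b‖ ≤ K κ^2 + t ‖b‖ / 2 ≤ K κ^2 + ε
    nlinarith [key2, htε, hbpos]
  -- Step 3 : combine
  have hsc : Real.sqrt c₀ ^ 2 = c₀ := Real.sq_sqrt hc0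
  have hsq4 : (2 * Real.sqrt c₀ * κ) ^ 2 = 4 * c₀ * κ ^ 2 := by
    rw [show (2 * Real.sqrt c₀ * κ) ^ 2 = 4 * (Real.sqrt c₀ ^ 2) * κ ^ 2 from by ring, hsc]
  have hb2 : ‖b‖ ≤ 2 * Real.sqrt c₀ * κ := by
    calc ‖b‖ = Real.sqrt (‖b‖ ^ 2) := (Real.sqrt_sq (norm_nonneg b)).symm
    _ ≤ Real.sqrt ((2 * Real.sqrt c₀ * κ) ^ 2) := Real.sqrt_le_sqrt (by rw [hsq4]; exact h1)
    _ = 2 * Real.sqrt c₀ * κ := Real.sqrt_sq (by positivity)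
  have hbsq : ‖b‖ ^ 2 ≤ 2 * (K : ℝ) * Real.sqrt c₀ * κ ^ 3 := by
    calc ‖b‖ ^ 2 = ‖b‖ * ‖b‖ := by ring
    _ ≤ ((K : ℝ) * κ ^ 2) * (2 * Real.sqrt c₀ * κ) :=
        mul_le_mul h2 hb2 (norm_nonneg b) (by positivity)
    _ = 2 * (K : ℝ) * Real.sqrt c₀ * κ ^ 3 := by ring
  have hsqle : Real.sqrt c₀ ≤ Real.sqrt (2 * c₀) := Real.sqrt_le_sqrt (by linarith)
  have hbsq2 : ‖b‖ ^ 2 ≤ 2 * (K : ℝ) * Real.sqrt (2 * c₀) * κ ^ 3 := by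
    have hmono : 2 * (K : ℝ) * Real.sqrt c₀ * κ ^ 3 ≤ 2 * (K : ℝ) * Real.sqrt (2 * c₀) * κ ^ 3 := by
      gcongr
    linarith
  have hP : (κ ^ ((3:ℝ)/2)) ^ 2 = κ ^ 3 := by
    rw [← Real.rpow_natCast (κ ^ ((3:ℝ)/2)) 2, ← Real.rpow_mul hκ.le]
    norm_num
  have hRsq : Real.sqrt (2 * (K : ℝ) * Real.sqrt (2 * c₀)) ^ 2 = 2 * (K : ℝ) * Real.sqrt (2 * c₀) := by
    apply Real.sq_sqrt; positivity
  have hRP2 : (Real.sqrt (2 * (K : ℝ) * Real.sqrt (2 * c₀)) * κ ^ ((3:ℝ)/2)) ^ 2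
      = 2 * (K : ℝ) * Real.sqrt (2 * c₀) * κ ^ 3 := by
    rw [mul_pow, hRsq, hP]
  calc ‖b‖ = Real.sqrt (‖b‖ ^ 2) := (Real.sqrt_sq (norm_nonneg b)).symm
  _ ≤ Real.sqrt ((Real.sqrt (2 * (K : ℝ) * Real.sqrt (2 * c₀)) * κ ^ ((3:ℝ)/2)) ^ 2) :=
      Real.sqrt_le_sqrt (by rw [hRP2]; exact hbsq2)
  _ = _ := Real.sqrt_sq (mul_nonneg (Real.sqrt_nonneg _) (Real.rpow_nonneg hκ.le _))
end

section
/- Let (x_N, v_N) for N ∈ ℕ be controlled processes on [0,N] (x_N absolutely continuous with derivative v_N) with uniform velocity bound |v_N(t)| ≤ C₃, taking values in a compact configuration space (e.g. trajectories in ℝ^d considered modulo ℤ^d, or assume all x_N lie in a fixed compact set). Define occupation measures μ_N on configuration × velocity space by ∫ ψ dμ_N = (1/N)∫₀^N ψ(x_N(t), v_N(t)) dt. Then there exists a subsequence μ_{N_k} converging narrowly to a probability measure μ supported on (compact set) × {|v| ≤ C₃}, and μ is holonomic: for every C¹ function φ on the configuration space, ∫ ⟨∇φ(x), v⟩ dμ(x,v)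 = 0. -/
open MeasureTheory Set Filter Topology TopologicalSpace
open scoped NNReal ENNReal

section ProkhorovCompact
variable {X : Type*} [MetricSpace X] [CompactSpace X] [SecondCountableTopology X]
  [MeasurableSpace X] [BorelSpace X]

lemma cm_integrable (ν : Measure X) [IsFiniteMeasure ν] (f : C(X,ℝ)) :
    Integrable (fun a => f a) ν := by
  exact (BoundedContinuousFunction.mkOfCompact f).integrable ν

lemma cm_abs_integral_le (ν : Measure X) [IsProbabilityMeasure ν] (f : C(X,ℝ)) :
    |∫ a, f a ∂ν| ≤ ‖f‖ := by
  have h := norm_integral_le_of_norm_le_const (μ := ν) (f := fun a => f a) (C := ‖f‖)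
    (Eventually.of_forall fun a => f.norm_coe_le_norm a)
  simpa using h

lemma cm_dist_integral_le (ν : Measure X) [IsProbabilityMeasure ν] (f g : C(X,ℝ)) :
    |∫ a, f a ∂ν - ∫ a, g a ∂ν| ≤ dist f g := by
  rw [← integral_sub (cm_integrable ν f) (cm_integrable ν g)]
  have := cm_abs_integral_le ν (f - g)
  simpa [dist_eq_norm] using this

theorem exists_subseq_tendsto_probabilityMeasure (ν : ℕ → ProbabilityMeasure X) :
    ∃ φ : ℕ → ℕ, StrictMono φ ∧ ∃ P : ProbabilityMeasure X,
      Tendsto (fun k => ν (φ k)) atTop (𝓝 P) := by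
  classical
  let fs : ℕ → C(X, ℝ) := denseSeq C(X, ℝ)
  have hfs : DenseRange fs := denseRange_denseSeq C(X, ℝ)
  -- diagonal extraction
  have hcomp : IsCompact (Set.pi (univ : Set ℕ) (fun j => Icc (-‖fs j‖) ‖fs j‖)) :=
    isCompact_univ_pi fun j => isCompact_Icc
  obtain ⟨l, -, φ, hφ, hconv⟩ := hcomp.isSeqCompact
    (x := fun k j => ∫ a, fs j a ∂(ν k : Measure X))
    (fun k => by
      intro j _
      have := cm_abs_integral_le (ν k : Measure X) (fs j)
      exact abs_le.mp this)
  have hcoord : ∀ j, Tendsto (fun k => ∫ a, fs j a ∂(ν (φ k) : Measure X)) atTop (𝓝 (l j)) := by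
    intro j
    have := tendsto_pi_nhds.mp hconv j
    exact this
  -- limits exist for all continuous functions
  have key : ∀ f : C(X, ℝ), ∃ Lf : ℝ,
      Tendsto (fun k => ∫ a, f a ∂(ν (φ k) : Measure X)) atTop (𝓝 Lf) := by
    intro f
    have cauchy : CauchySeq (fun k => ∫ a, f a ∂(ν (φ k) : Measure X)) := by
      rw [Metric.cauchySeq_iff]
      intro ε hε
      obtain ⟨j, hj⟩ := hfs.exists_dist_lt f (show (0:ℝ) < ε/3 by linarith)
      have hc : CauchySeq (fun k => ∫ a, fs j a ∂(ν (φ k) : Measure X)) := (hcoord j).cauchySeq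
      rw [Metric.cauchySeq_iff] at hc
      obtain ⟨N, hN⟩ := hc (ε/3) (by linarith)
      refine ⟨N, fun m hm n hn => ?_⟩
      have h1 := cm_dist_integral_le (ν (φ m) : Measure X) f (fs j)
      have h2 := cm_dist_integral_le (ν (φ n) : Measure X) f (fs j)
      have h3 := hN m hm n hn
      rw [Real.dist_eq] at h3 ⊢
      have hdj : dist f (fs j) < ε/3 := by first | exact hj | (rw [dist_comm]; exact hj)
      have t1 := abs_sub_le (∫ a, f a ∂(ν (φ m) : Measure X)) (∫ a, fs j a ∂(ν (φ m) : Measure X)) (∫ a, f a ∂(ν (φ n) : Measure X))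
      have t2 := abs_sub_le (∫ a, fs j a ∂(ν (φ m) : Measure X)) (∫ a, fs j a ∂(ν (φ n) : Measure X)) (∫ a, f a ∂(ν (φ n) : Measure X))
      have h2' : |∫ a, fs j a ∂(ν (φ n) : Measure X) - ∫ a, f a ∂(ν (φ n) : Measure X)| = |∫ a, f a ∂(ν (φ n) : Measure X) - ∫ a, fs j a ∂(ν (φ n) : Measure X)| := abs_sub_comm _ _
      linarith [h1.trans_lt hdj, (h2' ▸ h2).trans_lt hdj]
    exact cauchySeq_tendsto_of_complete cauchy
  choose L hLt using key
  -- properties of L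
  have hL1 : L 1 = 1 := by
    refine tendsto_nhds_unique (hLt 1) ?_
    have : (fun k => ∫ a, (1 : C(X,ℝ)) a ∂(ν (φ k) : Measure X)) = fun _ => (1:ℝ) := by
      funext k; simp
    rw [this]; exact tendsto_const_nhds
  have hLadd : ∀ f g : C(X,ℝ), L (f + g) = L f + L g := by
    intro f g
    refine tendsto_nhds_unique (hLt (f + g)) ?_
    have : (fun k => ∫ a, (f + g) a ∂(ν (φ k) : Measure X))
        = fun k => (∫ a, f a ∂(ν (φ k) : Measure X)) + ∫ a, g a ∂(ν (φ k) : Measure X) := by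
      funext k
      simpa [ContinuousMap.add_apply] using
        integral_add (cm_integrable (ν (φ k) : Measure X) f) (cm_integrable (ν (φ k) : Measure X) g)
    rw [this]; exact (hLt f).add (hLt g)
  have hLmono : ∀ f g : C(X,ℝ), (∀ a, f a ≤ g a) → L f ≤ L g := by
    intro f g hfg
    refine le_of_tendsto_of_tendsto' (hLt f) (hLt g) fun k => ?_
    exact integral_mono (cm_integrable _ f) (cm_integrable _ g) hfg
  have hLnn : ∀ f : C(X,ℝ), (∀ a, 0 ≤ f a) → 0 ≤ L f := by
    intro f hf
    refine ge_of_tendsto' (hLt f) fun k => integral_nonneg hf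
  -- the admissible sets and the content
  set adm : Set X → Set C(X,ℝ) := fun K => {f | (∀ a, 0 ≤ f a) ∧ ∀ a ∈ K, 1 ≤ f a} with hadm
  set SS : Set X → Set ℝ := fun K => L '' adm K with hSS
  have hone : ∀ K, (1 : C(X,ℝ)) ∈ adm K := fun K => ⟨fun a => by simp, fun a _ => by simp⟩
  have hSne : ∀ K, (SS K).Nonempty := fun K => ⟨L 1, 1, hone K, rfl⟩
  have hSbd : ∀ K, 0 ∈ lowerBounds (SS K) := by
    rintro K r ⟨f, hf, rfl⟩
    exact hLnn f hf.1
  have hSnn : ∀ K, 0 ≤ sInf (SS K) := fun K => le_csInf (hSne K) (fun r hr => hSbd K hr)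
  have hSuniv : sInf (SS univ) = 1 := by
    apply le_antisymm
    · have : L 1 ∈ SS univ := ⟨1, hone univ, rfl⟩
      simpa [hL1] using csInf_le ⟨0, hSbd univ⟩ this
    · refine le_csInf (hSne univ) ?_
      rintro r ⟨f, hf, rfl⟩
      have : L 1 ≤ L f := hLmono _ _ fun a => by simpa using hf.2 a (mem_univ a)
      simpa [hL1] using this
  -- content axioms
  have hmono : ∀ K₁ K₂ : Set X, K₁ ⊆ K₂ → sInf (SS K₁) ≤ sInf (SS K₂) := by
    intro K₁ K₂ h
    refine csInf_le_csInf ⟨0, hSbd K₁⟩ (hSne K₂) ?_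
    rintro r ⟨f, hf, rfl⟩
    exact ⟨f, ⟨hf.1, fun a ha => hf.2 a (h ha)⟩, rfl⟩
  have hsuple : ∀ K₁ K₂ : Set X, sInf (SS (K₁ ∪ K₂)) ≤ sInf (SS K₁) + sInf (SS K₂) := by
    intro K₁ K₂
    refine le_of_forall_pos_le_add ?_
    intro ε hε
    obtain ⟨r₁, ⟨f₁, hf₁, rfl⟩, hr₁⟩ := exists_lt_of_csInf_lt (hSne K₁)
      (lt_add_of_pos_right _ (half_pos hε))
    obtain ⟨r₂, ⟨f₂, hf₂, rfl⟩, hr₂⟩ := exists_lt_of_csInf_lt (hSne K₂)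
      (lt_add_of_pos_right _ (half_pos hε))
    have hmem : f₁ + f₂ ∈ adm (K₁ ∪ K₂) := by
      constructor
      · intro a; have := hf₁.1 a; have := hf₂.1 a
        simp only [ContinuousMap.add_apply]; linarith
      · rintro a (ha | ha)
        · have := hf₁.2 a ha; have := hf₂.1 a
          simp only [ContinuousMap.add_apply]; linarith
        · have := hf₂.2 a ha; have := hf₁.1 a
          simp only [ContinuousMap.add_apply]; linarith
    have : sInf (SS (K₁ ∪ K₂)) ≤ L (f₁ + f₂) := csInf_le ⟨0, hSbd _⟩ ⟨f₁ + f₂, hmem, rfl⟩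
    rw [hLadd] at this
    linarith
  have hsupdisj : ∀ K₁ K₂ : Set X, IsCompact K₁ → IsCompact K₂ → Disjoint K₁ K₂ →
      sInf (SS K₁) + sInf (SS K₂) ≤ sInf (SS (K₁ ∪ K₂)) := by
    intro K₁ K₂ hK₁ hK₂ hd
    refine le_csInf (hSne _) ?_
    rintro r ⟨f, hf, rfl⟩
    obtain ⟨u, hu0, hu1, hu01⟩ := exists_continuous_zero_one_of_isCompact hK₁ hK₂.isClosed hd
    have hmem₁ : f * (1 - u) ∈ adm K₁ := by
      constructor
      · intro a
        have h1 := hf.1 a; have h2 := (hu01 a).2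
        simp only [ContinuousMap.mul_apply, ContinuousMap.sub_apply, ContinuousMap.one_apply]
        nlinarith
      · intro a ha
        have := hf.2 a (Or.inl ha)
        have h0 : u a = 0 := hu0 ha
        simp only [ContinuousMap.mul_apply, ContinuousMap.sub_apply, ContinuousMap.one_apply, h0]
        linarith
    have hmem₂ : f * u ∈ adm K₂ := by
      constructor
      · intro a
        have h1 := hf.1 a; have h2 := (hu01 a).1
        simp only [ContinuousMap.mul_apply]
        nlinarith
      · intro a ha
        have := hf.2 a (Or.inr ha)
        have h0 : u a = 1 := hu1 ha
        simp only [ContinuousMap.mul_apply, h0]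
        linarith
    have hsum : f * (1 - u) + f * u = f := by ext a; simp; ring
    calc sInf (SS K₁) + sInf (SS K₂) ≤ L (f * (1 - u)) + L (f * u) :=
          add_le_add (csInf_le ⟨0, hSbd _⟩ ⟨_, hmem₁, rfl⟩) (csInf_le ⟨0, hSbd _⟩ ⟨_, hmem₂, rfl⟩)
      _ = L (f * (1 - u) + f * u) := (hLadd _ _).symm
      _ = L f := by rw [hsum]
  -- the content and its measure
  let c : Content X :=
    { toFun := fun K => Real.toNNReal (sInf (SS K))
      mono' := fun K₁ K₂ h => Real.toNNReal_mono (hmono _ _ h)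
      sup_disjoint' := by
        intro K₁ K₂ hd _ _
        have hle : sInf (SS ((K₁ ⊔ K₂ : Compacts X) : Set X)) ≤ sInf (SS K₁) + sInf (SS K₂) := by
          simpa [TopologicalSpace.Compacts.coe_sup] using hsuple (K₁ : Set X) K₂
        have hge := hsupdisj (K₁ : Set X) K₂ K₁.2 K₂.2 hd
        have heq : sInf (SS ((K₁ ⊔ K₂ : Compacts X) : Set X)) = sInf (SS K₁) + sInf (SS K₂) := by
          apply le_antisymm hle
          simpa [TopologicalSpace.Compacts.coe_sup] using hge
        rw [heq, Real.toNNReal_add (hSnn _) (hSnn _)]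
      sup_le' := by
        intro K₁ K₂
        have hle : sInf (SS ((K₁ ⊔ K₂ : Compacts X) : Set X)) ≤ sInf (SS K₁) + sInf (SS K₂) := by
          simpa [TopologicalSpace.Compacts.coe_sup] using hsuple (K₁ : Set X) K₂
        calc Real.toNNReal (sInf (SS ((K₁ ⊔ K₂ : Compacts X) : Set X)))
            ≤ Real.toNNReal (sInf (SS K₁) + sInf (SS K₂)) := Real.toNNReal_mono hle
          _ = _ := Real.toNNReal_add (hSnn _) (hSnn _) }
  have hcK : ∀ K : Compacts X, c.toFun K = Real.toNNReal (sInf (SS (K : Set X))) := fun K => rfl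
  let μ₀ : Measure X := c.measure
  have hμ₀open : ∀ (U : Set X) (hU : IsOpen U), μ₀ U = c.innerContent ⟨U, hU⟩ := by
    intro U hU
    rw [Content.measure_apply _ hU.measurableSet]
    exact c.outerMeasure_opens ⟨U, hU⟩
  have hμ₀univ : μ₀ univ = 1 := by
    rw [hμ₀open univ isOpen_univ]
    rw [c.innerContent_of_isCompact isCompact_univ isOpen_univ]
    change ((c.toFun _ : ℝ≥0) : ℝ≥0∞) = 1
    rw [hcK]
    have : ((⟨univ, isCompact_univ⟩ : Compacts X) : Set X) = univ := rfl
    rw [this, hSuniv]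
    norm_num
  have hPM : IsProbabilityMeasure μ₀ := ⟨hμ₀univ⟩
  let P₀ : ProbabilityMeasure X := ⟨μ₀, hPM⟩
  -- liminf bound on open sets, ENNReal version
  have hopens : ∀ (G : Set X), IsOpen G →
      μ₀ G ≤ atTop.liminf (fun k => (ν (φ k) : Measure X) G) := by
    intro G hG
    rw [hμ₀open G hG]
    rw [Content.innerContent]
    refine iSup₂_le ?_
    intro K hKG
    -- Urysohn function: 1 on K, 0 outside G
    obtain ⟨u, hu0, hu1, hu01⟩ := exists_continuous_zero_one_of_isCompact K.2
      hG.isClosed_compl (disjoint_left.mpr fun a haK haGc => haGc (hKG haK))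
    set f : C(X,ℝ) := 1 - u with hf
    have hfmem : f ∈ adm (K : Set X) := by
      constructor
      · intro a
        have := (hu01 a).2
        simp only [hf, ContinuousMap.sub_apply, ContinuousMap.one_apply]; linarith
      · intro a ha
        have h0 : u a = 0 := hu0 ha
        simp only [hf, ContinuousMap.sub_apply, ContinuousMap.one_apply, h0]; norm_num
    have hcKle : ((c.toFun K : ℝ≥0) : ℝ) ≤ L f := by
      rw [hcK, Real.coe_toNNReal _ (hSnn _)]
      exact csInf_le ⟨0, hSbd _⟩ ⟨f, hfmem, rfl⟩
    have hint_le : ∀ k, ∫ a, f a ∂(ν (φ k) : Measure X) ≤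
        ((ν (φ k) : Measure X) G).toReal := by
      intro k
      have hind : ∫ a, (G.indicator (fun _ => (1:ℝ))) a ∂(ν (φ k) : Measure X)
          = ((ν (φ k) : Measure X) G).toReal := by
        rw [integral_indicator_const (1:ℝ) hG.measurableSet]; simp; rfl
      rw [← hind]
      refine integral_mono (cm_integrable _ f) ?_ ?_
      · exact (integrable_const (1:ℝ)).indicator hG.measurableSet
      · intro a
        by_cases ha : a ∈ G
        · have := (hu01 a).1
          simp only [hf, indicator_of_mem ha, ContinuousMap.sub_apply, ContinuousMap.one_apply]
          linarith
        · have h1 : u a = 1 := hu1 ha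
          simp only [hf, indicator_of_notMem ha, ContinuousMap.sub_apply,
            ContinuousMap.one_apply, h1]
          norm_num
    -- conclude in ℝ≥0∞
    change ((c.toFun K : ℝ≥0) : ℝ≥0∞) ≤ _
    rw [le_liminf_iff]
    intro b hb
    have hbne : b ≠ ⊤ := by
      intro h; rw [h] at hb; exact (not_top_lt hb).elim
    have hbR : b.toReal < ((c.toFun K : ℝ≥0) : ℝ) := by
      have := (ENNReal.toReal_lt_toReal hbne ENNReal.coe_ne_top).mpr hb
      simpa only [ENNReal.coe_toReal] using this
    have hev : ∀ᶠ k in atTop, b.toReal < ∫ a, f a ∂(ν (φ k) : Measure X) :=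
      (hLt f).eventually_const_lt (lt_of_lt_of_le hbR hcKle)
    refine hev.mono fun k hk => ?_
    have h2 : b.toReal < ((ν (φ k) : Measure X) G).toReal := lt_of_lt_of_le hk (hint_le k)
    have hfin : (ν (φ k) : Measure X) G ≠ ⊤ := measure_ne_top _ _
    exact (ENNReal.toReal_lt_toReal hbne hfin).mp h2
  -- convert to ProbabilityMeasure/NNReal form and apply portmanteau
  have h_opens : ∀ G, IsOpen G → P₀ G ≤ atTop.liminf (fun k => (ν (φ k)) G) := by
    intro G hG
    have claim := hopens G hG
    have aux : ((atTop.liminf (fun k => (ν (φ k)) G) : ℝ≥0) : ℝ≥0∞)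
        = atTop.liminf (fun k => ((ν (φ k)) G : ℝ≥0∞)) := by
      refine Monotone.map_liminf_of_continuousAt (F := atTop) ENNReal.coe_mono
        (fun k => (ν (φ k)) G) ENNReal.continuous_coe.continuousAt ?_ ⟨0, by simp⟩
      exact IsBoundedUnder.isCoboundedUnder_ge ⟨1, by
        simp only [eventually_map, eventually_atTop]
        exact ⟨0, fun k _ => ProbabilityMeasure.apply_le_one _ _⟩⟩
    rw [← ENNReal.coe_le_coe, aux]
    have hc1 : ((P₀ G : ℝ≥0) : ℝ≥0∞) = μ₀ G := ProbabilityMeasure.ennreal_coeFn_eq_coeFn_toMeasure P₀ G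
    rw [hc1]
    refine le_trans claim (le_of_eq ?_)
    apply Filter.liminf_congr
    exact Eventually.of_forall fun k => (ProbabilityMeasure.ennreal_coeFn_eq_coeFn_toMeasure _ G).symm
  exact ⟨φ, hφ, P₀, tendsto_of_forall_isOpen_le_liminf h_opens⟩

end ProkhorovCompact


set_option maxHeartbeats 2000000 in
theorem stmt15 (d : ℕ) (Kset : Set (EuclideanSpace ℝ (Fin d))) (hKc : IsCompact Kset)
    (C₃ : ℝ) (hC₃ : 0 ≤ C₃)
    (x v : ℕ → ℝ → EuclideanSpace ℝ (Fin d))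
    (hmeas : ∀ N, Measurable (fun t => (x N t, v N t)))
    (hvb : ∀ N : ℕ, ∀ t ∈ Icc (0 : ℝ) N, ‖v N t‖ ≤ C₃)
    (hxK : ∀ N : ℕ, ∀ t ∈ Icc (0 : ℝ) N, x N t ∈ Kset)
    (hx : ∀ N : ℕ, ∀ t ∈ Icc (0 : ℝ) N, x N t = x N 0 + ∫ u in (0 : ℝ)..t, v N u)
    (hvint : ∀ N : ℕ, IntegrableOn (v N) (Icc (0 : ℝ) N))
    (μ : ℕ → Measure (EuclideanSpace ℝ (Fin d) × EuclideanSpace ℝ (Fin d)))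
    (hμ : ∀ N : ℕ, μ N = (N : ENNReal)⁻¹ •
      Measure.map (fun t => (x N t, v N t)) (volume.restrict (Icc (0 : ℝ) N))) :
    ∃ n : ℕ → ℕ, StrictMono n ∧ (∀ k, 1 ≤ n k) ∧
      ∃ μlim : Measure (EuclideanSpace ℝ (Fin d) × EuclideanSpace ℝ (Fin d)),
        IsProbabilityMeasure μlim ∧
        μlim ({z | z.1 ∈ Kset ∧ ‖z.2‖ ≤ C₃}ᶜ) = 0 ∧
        (∀ f : EuclideanSpace ℝ (Fin d) × EuclideanSpace ℝ (Fin d) → ℝ,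
          Continuous f → (∃ M, ∀ z, |f z| ≤ M) →
          Tendsto (fun k => ∫ z, f z ∂(μ (n k))) atTop (nhds (∫ z, f z ∂μlim))) ∧
        (∀ (ψ : EuclideanSpace ℝ (Fin d) → ℝ)
            (gψ : EuclideanSpace ℝ (Fin d) → EuclideanSpace ℝ (Fin d)),
          (∀ y, HasGradientAt ψ (gψ y) y) → Continuous gψ → (∃ M, ∀ y, |ψ y| ≤ M) →
          (∫ z, (inner ℝ (gψ z.1) z.2 : ℝ) ∂μlim) = 0) := by
  classical
  have h01 : (0:ℝ) ∈ Icc (0:ℝ) ((1:ℕ):ℝ) := by constructor <;> norm_num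
  have hKne : x 1 0 ∈ Kset := hxK 1 0 h01
  set K' : Set (EuclideanSpace ℝ (Fin d) × EuclideanSpace ℝ (Fin d)) :=
    Kset ×ˢ Metric.closedBall 0 C₃ with hK'def
  have hK'c : IsCompact K' := hKc.prod (isCompact_closedBall 0 C₃)
  have hK'm : MeasurableSet K' := hK'c.isClosed.measurableSet
  haveI : CompactSpace K' := isCompact_iff_compactSpace.mp hK'c
  haveI : BorelSpace K' := Subtype.borelSpace K'
  have hc₀ : ((x 1 0, (0 : EuclideanSpace ℝ (Fin d)))) ∈ K' :=
    ⟨hKne, by simpa [mem_closedBall_zero_iff] using hC₃⟩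
  set z : ℕ → ℝ → EuclideanSpace ℝ (Fin d) × EuclideanSpace ℝ (Fin d) :=
    fun N t => if t ∈ Icc (0:ℝ) N then (x N t, v N t) else (x 1 0, 0) with hzdef
  have hzK : ∀ N t, z N t ∈ K' := by
    intro N t
    by_cases ht : t ∈ Icc (0:ℝ) N
    · simp only [hzdef, if_pos ht]
      exact ⟨hxK N t ht, by simpa [mem_closedBall_zero_iff] using hvb N t ht⟩
    · simp only [hzdef, if_neg ht]
      exact hc₀
  have hzmeas : ∀ N, Measurable (z N) :=
    fun N => Measurable.ite measurableSet_Icc (hmeas N) measurable_const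
  set y : ℕ → ℝ → K' := fun N t => ⟨z N t, hzK N t⟩ with hydef
  have hymeas : ∀ N, Measurable (y N) := fun N => (hzmeas N).subtype_mk
  set ν : ℕ → Measure K' :=
    fun N => (N : ℝ≥0∞)⁻¹ • Measure.map (y N) (volume.restrict (Icc (0:ℝ) N)) with hνdef
  have hνprob : ∀ N : ℕ, 1 ≤ N → IsProbabilityMeasure (ν N) := by
    intro N hN
    constructor
    rw [hνdef]
    simp only [Measure.smul_apply]
    rw [Measure.map_apply (hymeas N) MeasurableSet.univ]
    simp only [preimage_univ]
    rw [Measure.restrict_apply MeasurableSet.univ, univ_inter, Real.volume_Icc]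
    have h1 : ENNReal.ofReal ((N:ℝ) - 0) = (N : ℝ≥0∞) := by
      rw [sub_zero]
      exact_mod_cast ENNReal.ofReal_natCast N
    rw [h1, smul_eq_mul, ENNReal.inv_mul_cancel (Nat.cast_ne_zero.mpr (by omega))
      (by simp)]
  have hmapν : ∀ N : ℕ, Measure.map Subtype.val (ν N) = μ N := by
    intro N
    rw [hμ N, hνdef]
    rw [Measure.map_smul]
    congr 1
    rw [Measure.map_map measurable_subtype_coe (hymeas N)]
    apply Measure.map_congr
    refine (ae_restrict_iff' measurableSet_Icc).mpr (Eventually.of_forall fun t ht => ?_)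
    show z N t = _
    simp only [hzdef, if_pos ht]
  set Pν : ℕ → ProbabilityMeasure K' := fun k => ⟨ν (k+1), hνprob (k+1) (by omega)⟩ with hPνdef
  obtain ⟨φ, hφ, P, hP⟩ := exists_subseq_tendsto_probabilityMeasure Pν
  haveI : IsProbabilityMeasure (P : Measure K') := P.2
  set μlim := Measure.map (Subtype.val) (P : Measure K') with hμlimdef
  have hconv : ∀ f : EuclideanSpace ℝ (Fin d) × EuclideanSpace ℝ (Fin d) → ℝ,
      Continuous f →
      Tendsto (fun k => ∫ z', f z' ∂(μ (φ k + 1))) atTop (𝓝 (∫ z', f z' ∂μlim)) := by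
    intro f hf
    have hcont : Continuous fun a : K' => f a.val := hf.comp continuous_subtype_val
    set fb := BoundedContinuousFunction.mkOfCompact (⟨fun a : K' => f a.val, hcont⟩ : C(K', ℝ))
      with hfbdef
    have key := ProbabilityMeasure.tendsto_iff_forall_integral_tendsto.mp hP fb
    have h1 : ∀ k, ∫ a, fb a ∂((Pν (φ k)) : Measure K') = ∫ z', f z' ∂(μ (φ k + 1)) := by
      intro k
      rw [← hmapν (φ k + 1),
        integral_map measurable_subtype_coe.aemeasurable hf.aestronglyMeasurable]
      rfl
    have h2 : ∫ a, fb a ∂(P : Measure K') = ∫ z', f z' ∂μlim := by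
      rw [hμlimdef, integral_map measurable_subtype_coe.aemeasurable hf.aestronglyMeasurable]
      rfl
    rw [← h2]
    exact key.congr fun k => h1 k
  refine ⟨fun k => φ k + 1, fun a b hab => Nat.add_lt_add_right (hφ hab) 1, fun k => Nat.le_add_left 1 (φ k),
    μlim, Measure.isProbabilityMeasure_map measurable_subtype_coe.aemeasurable, ?_, ?_, ?_⟩
  · have hset : {z' : EuclideanSpace ℝ (Fin d) × EuclideanSpace ℝ (Fin d) |
        z'.1 ∈ Kset ∧ ‖z'.2‖ ≤ C₃} = K' := by
      ext z'
      simp [hK'def, Set.mem_prod, mem_closedBall_zero_iff]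
    rw [hset, hμlimdef, Measure.map_apply measurable_subtype_coe hK'm.compl]
    have hempty : (Subtype.val : K' → _) ⁻¹' K'ᶜ = ∅ := by
      ext a
      simp only [mem_preimage, mem_compl_iff, mem_empty_iff_false, iff_false, not_not]
      exact a.2
    rw [hempty]
    exact measure_empty
  · intro f hf _
    exact hconv f hf
  · intro ψ gψ hgrad hgc hbψ
    obtain ⟨M, hM⟩ := hbψ
    have hM0 : 0 ≤ M := le_trans (abs_nonneg _) (hM (x 1 0))
    set f : EuclideanSpace ℝ (Fin d) × EuclideanSpace ℝ (Fin d) → ℝ :=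
      fun z' => (inner ℝ (gψ z'.1) z'.2 : ℝ) with hfdef
    have hfc : Continuous f := (hgc.comp continuous_fst).inner continuous_snd
    have hsub := hconv f hfc
    have hzero : Tendsto (fun N : ℕ => ∫ z', f z' ∂(μ N)) atTop (𝓝 0) := by
      set K₁ : Set (EuclideanSpace ℝ (Fin d)) := Metric.cthickening 1 Kset with hK₁def
      have hK₁c : IsCompact K₁ := hKc.cthickening
      have hKsub : Kset ⊆ K₁ := Metric.self_subset_cthickening Kset
      obtain ⟨B, hB⟩ := hK₁c.exists_bound_of_continuousOn hgc.continuousOn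
      have hB0 : 0 ≤ B := le_trans (norm_nonneg _) (hB (x 1 0) (hKsub hKne))
      rw [NormedAddCommGroup.tendsto_nhds_zero]
      intro ε hε
      set ε₁ : ℝ := ε / (2 * (C₃ + 1)) with hε₁def
      have hε₁ : 0 < ε₁ := by positivity
      obtain ⟨δ, hδpos, hδ⟩ : ∃ δ > 0, ∀ a ∈ K₁, ∀ b ∈ K₁, dist a b ≤ δ →
          dist (gψ a) (gψ b) ≤ ε₁ := by
        obtain ⟨δ, hδpos, H⟩ := Metric.uniformContinuousOn_iff_le.mp
          (hK₁c.uniformContinuousOn_of_continuous hgc.continuousOn) ε₁ hε₁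
        exact ⟨δ, hδpos, fun a ha b hb hab => H a ha b hb hab⟩
      set η : ℝ := min (δ / 2) 1 with hηdef
      have hη0 : 0 < η := lt_min (by linarith) one_pos
      have hηδ : η ≤ δ := le_trans (min_le_left _ _) (by linarith)
      have hη1 : η ≤ 1 := min_le_right _ _
      have hbound : ∀ N : ℕ, 1 ≤ N →
          |∫ z', f z' ∂(μ N)| ≤ (2 * M + B * η) / N + ε₁ * C₃ := by
        intro N hN1
        have hNpos : (0:ℝ) < N := by exact_mod_cast Nat.pos_of_ne_zero (by omega)
        have h0N : (0:ℝ) ≤ (N:ℝ) := le_of_lt hNpos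
        have hrep : ∫ z', f z' ∂(μ N) =
            (N:ℝ)⁻¹ * ∫ t in Icc (0:ℝ) N, f (x N t, v N t) := by
          rw [hμ N, integral_smul_measure,
            integral_map (hmeas N).aemeasurable hfc.aestronglyMeasurable]
          rw [smul_eq_mul, ENNReal.toReal_inv]
          norm_num
        set v' := (Icc (0:ℝ) N).indicator (v N) with hv'def
        have hv'int : Integrable v' := (integrable_indicator_iff measurableSet_Icc).mpr (hvint N)
        obtain ⟨w, -, hwL1, hwcont, hwint⟩ := hv'int.exists_hasCompactSupport_integral_sub_le hη0
        set Y : ℝ → EuclideanSpace ℝ (Fin d) := fun t => x N 0 + ∫ u in (0:ℝ)..t, w u with hYdef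
        have hYder : ∀ t, HasDerivAt Y (w t) t := fun t =>
          (intervalIntegral.integral_hasDerivAt_right (hwcont.intervalIntegrable _ _)
            hwcont.stronglyMeasurable.stronglyMeasurableAtFilter hwcont.continuousAt).const_add _
        have hYcont : Continuous Y := continuous_iff_continuousAt.mpr fun t => (hYder t).continuousAt
        have hL1 : ∀ t ∈ Icc (0:ℝ) (N:ℝ), ∫ u in Ioc (0:ℝ) t, ‖v N u - w u‖ ≤ η := by
          intro t ht
          have h1 : ∫ u in Ioc (0:ℝ) t, ‖v N u - w u‖ = ∫ u in Ioc (0:ℝ) t, ‖v' u - w u‖ := by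
            refine setIntegral_congr_fun measurableSet_Ioc fun u hu => ?_
            have : u ∈ Icc (0:ℝ) N := ⟨le_of_lt hu.1, le_trans hu.2 ht.2⟩
            rw [hv'def, indicator_of_mem this]
          rw [h1]
          refine le_trans (setIntegral_le_integral (hv'int.sub hwint).norm
            (Eventually.of_forall fun u => norm_nonneg _)) hwL1
        have hclose : ∀ t ∈ Icc (0:ℝ) (N:ℝ), ‖x N t - Y t‖ ≤ η := by
          intro t ht
          have hxi : IntervalIntegrable (v N) volume 0 t :=
            ((hvint N).mono_set (by rw [uIcc_of_le ht.1]; exact Icc_subset_Icc le_rfl ht.2)).intervalIntegrable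
          have hwi : IntervalIntegrable w volume 0 t := hwcont.intervalIntegrable _ _
          have heq : x N t - Y t = ∫ u in (0:ℝ)..t, (v N u - w u) := by
            rw [hx N t ht, hYdef, intervalIntegral.integral_sub hxi hwi]
            exact add_sub_add_left_eq_sub _ _ _
          rw [heq]
          calc ‖∫ u in (0:ℝ)..t, (v N u - w u)‖ ≤ ∫ u in (0:ℝ)..t, ‖v N u - w u‖ :=
                intervalIntegral.norm_integral_le_integral_norm ht.1
            _ = ∫ u in Ioc (0:ℝ) t, ‖v N u - w u‖ := intervalIntegral.integral_of_le ht.1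
            _ ≤ η := hL1 t ht
        have hYK₁ : ∀ t ∈ Icc (0:ℝ) (N:ℝ), Y t ∈ K₁ := by
          intro t ht
          refine Metric.mem_cthickening_of_dist_le (Y t) (x N t) 1 Kset (hxK N t ht) ?_
          rw [dist_eq_norm, norm_sub_rev]
          exact le_trans (hclose t ht) hη1
        have hd : ∀ t ∈ uIcc (0:ℝ) (N:ℝ),
            HasDerivAt (fun s => ψ (Y s)) (inner ℝ (gψ (Y t)) (w t) : ℝ) t := by
          intro t _
          have h1 := (hgrad (Y t)).hasFDerivAt.comp_hasDerivAt t (hYder t)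
          simp [InnerProductSpace.toDual_apply_apply] at h1
          exact h1
        have hGcont : Continuous (fun t => (inner ℝ (gψ (Y t)) (w t) : ℝ)) :=
          (hgc.comp hYcont).inner hwcont
        have hFTC : ∫ t in (0:ℝ)..(N:ℝ), (inner ℝ (gψ (Y t)) (w t) : ℝ) = ψ (Y N) - ψ (Y 0) :=
          intervalIntegral.integral_eq_sub_of_hasDerivAt hd (hGcont.intervalIntegrable _ _)
        set F : ℝ → ℝ := fun t => (inner ℝ (gψ (x N t)) (v N t) : ℝ) with hFdef
        set G : ℝ → ℝ := fun t => (inner ℝ (gψ (Y t)) (w t) : ℝ) with hGdef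
        have hxm : Measurable (fun t => x N t) := continuous_fst.measurable.comp (hmeas N)
        have hvm : Measurable (fun t => v N t) := continuous_snd.measurable.comp (hmeas N)
        have hFm : Measurable F := (hgc.measurable.comp hxm).inner hvm
        have hFbd : ∀ t ∈ Icc (0:ℝ) (N:ℝ), |F t| ≤ B * C₃ := by
          intro t ht
          calc |F t| ≤ ‖gψ (x N t)‖ * ‖v N t‖ := abs_real_inner_le_norm _ _
            _ ≤ B * C₃ := mul_le_mul (hB _ (hKsub (hxK N t ht))) (hvb N t ht)
                (norm_nonneg _) hB0
        have hFint : IntegrableOn F (Icc (0:ℝ) N) := by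
          refine Integrable.mono' (integrable_const (B * C₃)) hFm.aestronglyMeasurable.restrict ?_
          refine (ae_restrict_iff' measurableSet_Icc).mpr (Eventually.of_forall fun t ht => ?_)
          simpa [Real.norm_eq_abs] using hFbd t ht
        have hGint : IntegrableOn G (Icc (0:ℝ) N) := hGcont.integrableOn_Icc
        have hvwint : IntegrableOn (fun t => ‖v N t - w t‖) (Icc (0:ℝ) N) :=
          ((hvint N).sub hwint.integrableOn).norm
        have hdiffbd : ∀ t ∈ Icc (0:ℝ) (N:ℝ), |F t - G t| ≤ ε₁ * C₃ + B * ‖v N t - w t‖ := by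
          intro t ht
          have h1 : F t - G t = (inner ℝ (gψ (x N t) - gψ (Y t)) (v N t) : ℝ)
              + (inner ℝ (gψ (Y t)) (v N t - w t) : ℝ) := by
            rw [hFdef, hGdef]
            simp only [inner_sub_left, inner_sub_right]
            ring
          rw [h1]
          have e1 : |(inner ℝ (gψ (x N t) - gψ (Y t)) (v N t) : ℝ)| ≤ ε₁ * C₃ := by
            have hd1 : dist (gψ (x N t)) (gψ (Y t)) ≤ ε₁ :=
              hδ (x N t) (hKsub (hxK N t ht)) (Y t) (hYK₁ t ht)
                (by rw [dist_eq_norm]; exact le_trans (hclose t ht) hηδ)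
            rw [dist_eq_norm] at hd1
            calc |(inner ℝ (gψ (x N t) - gψ (Y t)) (v N t) : ℝ)|
                ≤ ‖gψ (x N t) - gψ (Y t)‖ * ‖v N t‖ := abs_real_inner_le_norm _ _
              _ ≤ ε₁ * C₃ := mul_le_mul hd1 (hvb N t ht) (norm_nonneg _) (le_of_lt hε₁)
          have e2 : |(inner ℝ (gψ (Y t)) (v N t - w t) : ℝ)| ≤ B * ‖v N t - w t‖ :=
            le_trans (abs_real_inner_le_norm _ _)
              (mul_le_mul_of_nonneg_right (hB _ (hYK₁ t ht)) (norm_nonneg _))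
          exact le_trans (abs_add_le _ _) (add_le_add e1 e2)
        have hIdiff : |∫ t in Icc (0:ℝ) N, (F t - G t)| ≤ ε₁ * C₃ * N + B * η := by
          have h1 : |∫ t in Icc (0:ℝ) N, (F t - G t)| ≤
              ∫ t in Icc (0:ℝ) N, |F t - G t| := by
            simpa [Real.norm_eq_abs] using
              norm_integral_le_integral_norm (μ := volume.restrict (Icc (0:ℝ) N))
                (f := fun t => F t - G t)
          have h2 : ∫ t in Icc (0:ℝ) N, |F t - G t| ≤
              ∫ t in Icc (0:ℝ) N, (ε₁ * C₃ + B * ‖v N t - w t‖) := by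
            refine setIntegral_mono_on (hFint.sub hGint).abs
              ((integrable_const _).add (hvwint.const_mul B)) measurableSet_Icc hdiffbd
          have h3 : ∫ t in Icc (0:ℝ) N, (ε₁ * C₃ + B * ‖v N t - w t‖)
              = ε₁ * C₃ * N + B * ∫ t in Icc (0:ℝ) N, ‖v N t - w t‖ := by
            rw [integral_add (integrable_const _) (hvwint.const_mul B)]
            rw [setIntegral_const, integral_const_mul]
            rw [measureReal_def, Real.volume_Icc, sub_zero, ENNReal.toReal_ofReal h0N, smul_eq_mul]
            ring
          have h4 : ∫ t in Icc (0:ℝ) N, ‖v N t - w t‖ ≤ η := by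
            rw [integral_Icc_eq_integral_Ioc]
            exact hL1 N (right_mem_Icc.mpr h0N)
          calc |∫ t in Icc (0:ℝ) N, (F t - G t)| ≤ _ := h1
            _ ≤ _ := h2
            _ = ε₁ * C₃ * N + B * ∫ t in Icc (0:ℝ) N, ‖v N t - w t‖ := h3
            _ ≤ ε₁ * C₃ * N + B * η := by nlinarith [h4]
        have hIG : |∫ t in Icc (0:ℝ) N, G t| ≤ 2 * M := by
          rw [integral_Icc_eq_integral_Ioc, ← intervalIntegral.integral_of_le h0N, hFTC]
          calc |ψ (Y N) - ψ (Y 0)| ≤ |ψ (Y N)| + |ψ (Y 0)| := abs_sub _ _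
            _ ≤ 2 * M := by linarith [hM (Y N), hM (Y 0)]
        have hsplit : (∫ t in Icc (0:ℝ) N, F t) - ∫ t in Icc (0:ℝ) N, G t
            = ∫ t in Icc (0:ℝ) N, (F t - G t) := (integral_sub hFint hGint).symm
        have hIF : |∫ t in Icc (0:ℝ) N, F t| ≤ 2 * M + (ε₁ * C₃ * N + B * η) := by
          have heq : (∫ t in Icc (0:ℝ) N, F t)
              = ((∫ t in Icc (0:ℝ) N, F t) - ∫ t in Icc (0:ℝ) N, G t)
                + ∫ t in Icc (0:ℝ) N, G t := by ring
          rw [heq, hsplit]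
          exact le_trans (abs_add_le _ _) (by linarith [hIdiff, hIG])
        rw [hrep]
        rw [abs_mul, abs_inv, abs_of_nonneg h0N]
        calc (N:ℝ)⁻¹ * |∫ t in Icc (0:ℝ) N, F t|
            ≤ (N:ℝ)⁻¹ * (2 * M + (ε₁ * C₃ * N + B * η)) := by
              exact mul_le_mul_of_nonneg_left hIF (inv_nonneg.mpr h0N)
          _ = (2 * M + B * η) / N + ε₁ * C₃ := by
              field_simp
              ring
      have hto : Tendsto (fun N : ℕ => (2 * M + B * η) / N + ε₁ * C₃) atTop (𝓝 (0 + ε₁ * C₃)) :=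
        (tendsto_const_div_atTop_nhds_zero_nat _).add tendsto_const_nhds
      rw [zero_add] at hto
      have hlt : ε₁ * C₃ < ε := by
        rw [hε₁def]
        rw [div_mul_eq_mul_div]
        rw [div_lt_iff₀ (by linarith)]
        nlinarith
      filter_upwards [hto.eventually_lt_const hlt, eventually_ge_atTop 1] with N h1 h2
      rw [Real.norm_eq_abs]
      exact lt_of_le_of_lt (hbound N h2) h1
    have hmono : StrictMono (fun k => φ k + 1) := fun a b hab => Nat.add_lt_add_right (hφ hab) 1
    have := hzero.comp hmono.tendsto_atTop
    exact tendsto_nhds_unique hsub this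
end
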